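/- Let Q be a rack and N ∈ Norm(Q), i.e., a subgroup of Dis(Q) normal in LMlt(Q). Then Dis_{con_N} ≤ N ≤ Dis^{con_N}, and con_N = 1_Q (the full relation) if and only if N = Dis(Q). -/
import Mathlib


structure LeftQuasigroup (Q : Type*) where
  op : Q → Q → Q
  dv : Q → Q → Q
  dv_op : ∀ x y, dv x (op x y) = y
  op_dv : ∀ x y, op x (dv x y) = y

namespace LeftQuasigroup

variable {Q : Type*} (S : LeftQuasigroup Q)

/-- The left translation by `a`, as a permutation of `Q`. -/
def L (a : Q) : Equiv.Perm Q :=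
  ⟨S.op a, S.dv a, S.dv_op a, S.op_dv a⟩

/-- The left multiplication group. -/
def LMlt : Subgroup (Equiv.Perm Q) :=
  Subgroup.closure (Set.range S.L)

/-- The displacement group. -/
def Dis : Subgroup (Equiv.Perm Q) :=
  Subgroup.closure { f | ∃ a b, f = S.L a * (S.L b)⁻¹ }

/-- `α` is a congruence of the left quasigroup. -/
def IsCongruence (α : Q → Q → Prop) : Prop :=
  Equivalence α ∧
  (∀ a b c d, α a b → α c d → α (S.op a c) (S.op b d)) ∧
  (∀ a b c d, α a b → α c d → α (S.dv a c) (S.dv b d))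

/-- The displacement group relative to `α`: the smallest normal subgroup of
`LMlt` containing all `L a * (L b)⁻¹` with `α a b`, given explicitly as the
subgroup generated by the `LMlt`-conjugates of such elements. -/
def DisRel (α : Q → Q → Prop) : Subgroup (Equiv.Perm Q) :=
  Subgroup.closure
    { f | ∃ g ∈ S.LMlt, ∃ a b, α a b ∧ f = g * (S.L a * (S.L b)⁻¹) * g⁻¹ }

/-- The set `Dis^α = {h ∈ Dis(Q) : h(a) α a for all a}`. -/
def DisUpSet (α : Q → Q → Prop) : Set (Equiv.Perm Q) :=
  { h | h ∈ S.Dis ∧ ∀ a, α (h a) a }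

/-- Left self-distributivity, making a left quasigroup a rack. -/
def IsRack : Prop :=
  ∀ x y z, S.op x (S.op y z) = S.op (S.op x y) (S.op x z)

end LeftQuasigroup

open LeftQuasigroup

lemma aux_conj {Q : Type*} (S : LeftQuasigroup Q) (hSD : S.IsRack) :
    ∀ h ∈ S.LMlt, ∀ a : Q, h * S.L a * h⁻¹ = S.L (h a) := by
  intro h hh
  refine Subgroup.closure_induction ?_ ?_ ?_ ?_ hh
  · rintro f ⟨x, rfl⟩ a
    have key : S.L x * S.L a = S.L (S.L x a) * S.L x := by
      ext b
      exact hSD x a b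
    rw [mul_inv_eq_iff_eq_mul, key]
  · intro a
    simp
  · intro f g _ _ hf hg a
    have : f * g * S.L a * (f * g)⁻¹ = f * (g * S.L a * g⁻¹) * f⁻¹ := by
      group
    rw [this, hg, hf]
    simp
  · intro f _ hf a
    have h1 := hf (f⁻¹ a)
    have : S.L a = f * S.L (f⁻¹ a) * f⁻¹ := by
      rw [h1]; simp
    rw [this]
    group

lemma aux_dis_le_lmlt {Q : Type*} (S : LeftQuasigroup Q) : S.Dis ≤ S.LMlt := by
  refine Subgroup.closure_le _ |>.2 ?_
  rintro f ⟨a, b, rfl⟩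
  exact mul_mem (Subgroup.subset_closure ⟨a, rfl⟩)
    (inv_mem (Subgroup.subset_closure ⟨b, rfl⟩))


/-- `Dis_{con_N} ≤ N ≤ Dis^{con_N}`, and `con_N` is the full relation iff
`N = Dis(Q)`. -/
theorem stmt_12 {Q : Type*} (S : LeftQuasigroup Q) (hSD : S.IsRack)
    (N : Subgroup (Equiv.Perm Q)) (hN1 : N ≤ S.Dis)
    (hN2 : ∀ g ∈ S.LMlt, ∀ n ∈ N, g * n * g⁻¹ ∈ N) :
    S.DisRel (fun a b => S.L a * (S.L b)⁻¹ ∈ N) ≤ N ∧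
    (N : Set (Equiv.Perm Q)) ⊆
      S.DisUpSet (fun a b => S.L a * (S.L b)⁻¹ ∈ N) ∧
    ((∀ a b : Q, S.L a * (S.L b)⁻¹ ∈ N) ↔ N = S.Dis) := by
  have conj := aux_conj S hSD
  have hDL := aux_dis_le_lmlt S
  refine ⟨?_, ?_, ?_⟩
  · refine Subgroup.closure_le _ |>.2 ?_
    rintro f ⟨g, hg, a, b, hab, rfl⟩
    exact hN2 g hg _ hab
  · intro h hh
    refine ⟨hN1 hh, fun a => ?_⟩
    have hL : h * S.L a * h⁻¹ = S.L (h a) := conj h (hDL (hN1 hh)) a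
    have : S.L (h a) * (S.L a)⁻¹ = h * (S.L a * h⁻¹ * (S.L a)⁻¹) := by
      rw [← hL]; group
    show S.L (h a) * (S.L a)⁻¹ ∈ N
    rw [this]
    exact mul_mem hh (hN2 (S.L a) (Subgroup.subset_closure ⟨a, rfl⟩) _ (inv_mem hh))
  · constructor
    · intro hall
      refine le_antisymm hN1 ?_
      refine Subgroup.closure_le _ |>.2 ?_
      rintro f ⟨a, b, rfl⟩
      exact hall a b
    · rintro rfl a b
      exact Subgroup.subset_closure ⟨a, b, rfl⟩
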